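/- arXiv:2512.08655 — 2 statements merged into one kernel-verified Lean document; each statement's English description precedes it below -/
import Mathlib

section
/- For a smooth positive function ρ on the 3-torus, the Bohm potential identity holds: div(ρ ∇² log ρ) = 2ρ ∇(Δ√ρ / √ρ), where ∇² denotes the Hessian. -/
open scoped BigOperators
open Real

noncomputable def pd (i : Fin 3) (f : (Fin 3 → ℝ) → ℝ) (x : Fin 3 → ℝ) : ℝ :=
  fderiv ℝ f x (Pi.single i 1)

section aux
variable {f g : (Fin 3 → ℝ) → ℝ} {x : Fin 3 → ℝ} {i j : Fin 3}

lemma pd_eval {f' : (Fin 3 → ℝ) →L[ℝ] ℝ} (h : HasFDerivAt f f' x) (j : Fin 3) :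
    pd j f x = f' (Pi.single j 1) := by rw [pd, h.fderiv]

lemma pd_smooth (hf : ContDiff ℝ (⊤:ℕ∞) f) (j : Fin 3) : ContDiff ℝ (⊤:ℕ∞) (pd j f) := by
  have h1 : ContDiff ℝ (⊤:ℕ∞) (fderiv ℝ f) := hf.fderiv_right (by exact_mod_cast le_top)
  exact ((ContinuousLinearMap.apply ℝ ℝ ((Pi.single j 1 : Fin 3 → ℝ))).contDiff).comp h1

lemma sm_diff (hf : ContDiff ℝ (⊤:ℕ∞) f) : DifferentiableAt ℝ f x :=
  (hf.differentiable (by simp)).differentiableAt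

lemma pd_mul (hf : DifferentiableAt ℝ f x) (hg : DifferentiableAt ℝ g x) :
    pd j (fun y => f y * g y) x = pd j f x * g x + f x * pd j g x := by
  rw [pd, fderiv_fun_mul hf hg]
  simp [pd, smul_eq_mul]
  ring

lemma pd_sub (hf : DifferentiableAt ℝ f x) (hg : DifferentiableAt ℝ g x) :
    pd j (fun y => f y - g y) x = pd j f x - pd j g x := by
  rw [pd, fderiv_fun_sub hf hg]; simp [pd]

lemma pd_const_mul (hf : DifferentiableAt ℝ f x) (c : ℝ) :
    pd j (fun y => c * f y) x = c * pd j f x := by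
  rw [pd, fderiv_const_mul hf]; simp [pd]

lemma pd_inv (hf : DifferentiableAt ℝ f x) (hne : f x ≠ 0) :
    pd j (fun y => (f y)⁻¹) x = -(pd j f x) / (f x)^2 := by
  have h : HasFDerivAt (fun y => (f y)⁻¹) ((-((f x)^2)⁻¹) • fderiv ℝ f x) x :=
    (hasDerivAt_inv hne).comp_hasFDerivAt x hf.hasFDerivAt
  rw [pd_eval h]
  simp [pd, smul_eq_mul]
  ring

lemma diff_inv (hf : DifferentiableAt ℝ f x) (hne : f x ≠ 0) :
    DifferentiableAt ℝ (fun y => (f y)⁻¹) x :=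
  ((hasDerivAt_inv hne).comp_hasFDerivAt x hf.hasFDerivAt).differentiableAt

lemma pd_div (hf : DifferentiableAt ℝ f x) (hg : DifferentiableAt ℝ g x) (hne : g x ≠ 0) :
    pd j (fun y => f y / g y) x = (pd j f x * g x - f x * pd j g x) / (g x)^2 := by
  have h1 : (fun y => f y / g y) = fun y => f y * (g y)⁻¹ := by
    funext y; rw [div_eq_mul_inv]
  rw [h1, pd_mul hf (diff_inv hg hne), pd_inv hg hne]
  field_simp
  ring

lemma pd_log (hf : DifferentiableAt ℝ f x) (hne : f x ≠ 0) :
    pd j (fun y => Real.log (f y)) x = pd j f x / f x := by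
  have h : HasFDerivAt (fun y => Real.log (f y)) ((f x)⁻¹ • fderiv ℝ f x) x :=
    (Real.hasDerivAt_log hne).comp_hasFDerivAt x hf.hasFDerivAt
  rw [pd_eval h]
  simp [pd, smul_eq_mul, div_eq_mul_inv]
  ring

lemma pd_sqrt (hf : DifferentiableAt ℝ f x) (hne : f x ≠ 0) :
    pd j (fun y => Real.sqrt (f y)) x = pd j f x / (2 * Real.sqrt (f x)) := by
  have h : HasFDerivAt (fun y => Real.sqrt (f y)) ((1 / (2 * Real.sqrt (f x))) • fderiv ℝ f x) x :=
    (Real.hasDerivAt_sqrt hne).comp_hasFDerivAt x hf.hasFDerivAt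
  rw [pd_eval h]
  simp [pd, smul_eq_mul, div_eq_mul_inv]
  ring

lemma pd_sum {F : Fin 3 → (Fin 3 → ℝ) → ℝ} (h : ∀ k, DifferentiableAt ℝ (F k) x) (j : Fin 3) :
    pd j (fun y => ∑ k, F k y) x = ∑ k, pd j (F k) x := by
  rw [pd, fderiv_fun_sum (fun k _ => h k)]; simp [pd]

lemma pd_comm (hf : ContDiff ℝ (⊤:ℕ∞) f) (i j : Fin 3) (x : Fin 3 → ℝ) :
    pd i (pd j f) x = pd j (pd i f) x := by
  have hfd : ContDiff ℝ (⊤:ℕ∞) (fderiv ℝ f) := hf.fderiv_right (by exact_mod_cast le_top)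
  have hd : DifferentiableAt ℝ (fderiv ℝ f) x := (hfd.differentiable (by simp)).differentiableAt
  have h1 : ∀ (a b : Fin 3),
      pd a (pd b f) x = fderiv ℝ (fderiv ℝ f) x (Pi.single a 1) (Pi.single b 1) := by
    intro a b
    unfold pd
    rw [fderiv_clm_apply hd (differentiableAt_const _)]
    simp
  rw [h1, h1]
  exact (hf.contDiffAt.isSymmSndFDerivAt (by rw [minSmoothness_of_isRCLikeNormedField]; exact WithTop.coe_le_coe.mpr (le_top : (2:ℕ∞) ≤ ⊤))) _ _

end aux

/-- Bohm potential identity: `div(ρ ∇² log ρ) = 2 ρ ∇(Δ√ρ / √ρ)` componentwise,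
for smooth positive `ρ`. -/
theorem bohm_potential_identity (ρ : (Fin 3 → ℝ) → ℝ)
    (hρ : ContDiff ℝ (⊤ : ℕ∞) ρ) (hpos : ∀ x, 0 < ρ x) :
    ∀ (x : Fin 3 → ℝ) (i : Fin 3),
      (∑ j, pd j (fun y => ρ y * pd i (pd j (fun z => Real.log (ρ z))) y) x)
        = 2 * ρ x * pd i (fun y =>
            (∑ j, pd j (pd j (fun z => Real.sqrt (ρ z))) y) / Real.sqrt (ρ y)) x := by
  intro x i
  have hne : ∀ y, ρ y ≠ 0 := fun y => ne_of_gt (hpos y)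
  have hρd : ∀ y, DifferentiableAt ℝ ρ y := fun _ => sm_diff hρ
  have hS : ContDiff ℝ (⊤:ℕ∞) (fun z => Real.sqrt (ρ z)) :=
    contDiff_iff_contDiffAt.mpr fun y => (Real.contDiffAt_sqrt (hne y)).comp y hρ.contDiffAt
  have hsne : ∀ y, Real.sqrt (ρ y) ≠ 0 := fun y => Real.sqrt_ne_zero'.mpr (hpos y)
  have hsq : ∀ y, Real.sqrt (ρ y) ^ 2 = ρ y := fun y => Real.sq_sqrt (hpos y).le
  have smP : ∀ k : Fin 3, ContDiff ℝ (⊤:ℕ∞) (pd k ρ) := fun k => pd_smooth hρ k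
  have smQ : ∀ k l : Fin 3, ContDiff ℝ (⊤:ℕ∞) (pd k (pd l ρ)) := fun k l => pd_smooth (smP l) k
  -- first derivatives of log and sqrt
  have hLd : ∀ j : Fin 3, pd j (fun z => Real.log (ρ z)) = fun y => pd j ρ y / ρ y :=
    fun j => funext fun y => pd_log (hρd y) (hne y)
  have hSd : ∀ j : Fin 3,
      pd j (fun z => Real.sqrt (ρ z)) = fun y => pd j ρ y / (2 * Real.sqrt (ρ y)) :=
    fun j => funext fun y => pd_sqrt (hρd y) (hne y)
  -- hessian of log
  have hH : ∀ (j : Fin 3) (y : Fin 3 → ℝ),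
      pd i (pd j (fun z => Real.log (ρ z))) y
        = (pd i (pd j ρ) y * ρ y - pd j ρ y * pd i ρ y) / (ρ y)^2 := by
    intro j y
    rw [hLd j]
    exact pd_div (sm_diff (smP j)) (hρd y) (hne y)
  -- second derivative of sqrt
  have hT : ∀ (j : Fin 3) (y : Fin 3 → ℝ),
      pd j (pd j (fun z => Real.sqrt (ρ z))) y
        = pd j (pd j ρ) y / (2 * Real.sqrt (ρ y))
          - pd j ρ y * pd j ρ y / (4 * Real.sqrt (ρ y) * ρ y) := by
    intro j y
    rw [hSd j]
    rw [pd_div (sm_diff (smP j)) (sm_diff (contDiff_const.mul hS))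
      (mul_ne_zero two_ne_zero (hsne y))]
    rw [pd_const_mul (sm_diff hS) 2]
    rw [pd_sqrt (hρd y) (hne y)]
    have h2 : Real.sqrt (ρ y)^2 = ρ y := hsq y
    have hs0 : Real.sqrt (ρ y) ≠ 0 := hsne y
    generalize hgen : Real.sqrt (ρ y) = s at h2 hs0 ⊢
    rw [← h2]
    field_simp
    ring
  -- split RHS into a sum
  have esum : (fun y => (∑ j, pd j (pd j (fun z => Real.sqrt (ρ z))) y) / Real.sqrt (ρ y))
      = fun y => ∑ j, pd j (pd j (fun z => Real.sqrt (ρ z))) y / Real.sqrt (ρ y) := by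
    funext y; rw [Finset.sum_div]
  have hFk : ∀ k : Fin 3, ContDiff ℝ (⊤:ℕ∞)
      (fun y => pd k (pd k (fun z => Real.sqrt (ρ z))) y / Real.sqrt (ρ y)) :=
    fun k => (pd_smooth (pd_smooth hS k) k).div hS hsne
  rw [esum, pd_sum (fun k => sm_diff (hFk k)) i, Finset.mul_sum]
  refine Finset.sum_congr rfl (fun j _ => ?_)
  -- per-component computation
  -- LHS
  have e1 : (fun y => ρ y * pd i (pd j (fun z => Real.log (ρ z))) y)
      = fun y => ρ y * ((pd i (pd j ρ) y * ρ y - pd j ρ y * pd i ρ y) / (ρ y)^2) := by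
    funext y; rw [hH j y]
  have hNsm : ContDiff ℝ (⊤:ℕ∞) (fun y => pd i (pd j ρ) y * ρ y - pd j ρ y * pd i ρ y) :=
    ((smQ i j).mul hρ).sub ((smP j).mul (smP i))
  have hGsm : ContDiff ℝ (⊤:ℕ∞)
      (fun y => (pd i (pd j ρ) y * ρ y - pd j ρ y * pd i ρ y) / (ρ y)^2) :=
    hNsm.div (hρ.pow 2) (fun y => pow_ne_zero 2 (hne y))
  rw [e1, pd_mul (hρd x) (sm_diff hGsm)]
  rw [pd_div (sm_diff hNsm) (sm_diff (hρ.pow 2)) (pow_ne_zero 2 (hne x))]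
  rw [pd_sub (sm_diff ((smQ i j).mul hρ)) (sm_diff ((smP j).mul (smP i)))]
  rw [pd_mul (sm_diff (smQ i j)) (hρd x)]
  rw [pd_mul (sm_diff (smP j)) (sm_diff (smP i))]
  have e2 : (fun y => (ρ y)^2) = fun y => ρ y * ρ y := by funext y; ring
  rw [e2, pd_mul (hρd x) (hρd x)]
  rw [pd_comm (smP j) j i x, pd_comm hρ j i x]
  -- RHS
  have e3 : (fun y => pd j (pd j (fun z => Real.sqrt (ρ z))) y / Real.sqrt (ρ y))
      = fun y => (pd j (pd j ρ) y / (2 * Real.sqrt (ρ y))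
          - pd j ρ y * pd j ρ y / (4 * Real.sqrt (ρ y) * ρ y)) / Real.sqrt (ρ y) := by
    funext y; rw [hT j y]
  have hF1sm : ContDiff ℝ (⊤:ℕ∞) (fun y => pd j (pd j ρ) y / (2 * Real.sqrt (ρ y))) :=
    (smQ j j).div (contDiff_const.mul hS) (fun y => mul_ne_zero two_ne_zero (hsne y))
  have hF2sm : ContDiff ℝ (⊤:ℕ∞)
      (fun y => pd j ρ y * pd j ρ y / (4 * Real.sqrt (ρ y) * ρ y)) :=
    ((smP j).mul (smP j)).div ((contDiff_const.mul hS).mul hρ)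
      (fun y => mul_ne_zero (mul_ne_zero four_ne_zero (hsne y)) (hne y))
  rw [e3, pd_div (sm_diff (hF1sm.sub hF2sm)) (sm_diff hS) (hsne x)]
  rw [pd_sub (sm_diff hF1sm) (sm_diff hF2sm)]
  rw [pd_div (sm_diff (smQ j j)) (sm_diff (contDiff_const.mul hS))
    (mul_ne_zero two_ne_zero (hsne x))]
  rw [pd_div (sm_diff ((smP j).mul (smP j))) (sm_diff ((contDiff_const.mul hS).mul hρ))
    (mul_ne_zero (mul_ne_zero four_ne_zero (hsne x)) (hne x))]
  rw [pd_mul (sm_diff (smP j)) (sm_diff (smP j))]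
  rw [pd_mul (sm_diff (contDiff_const.mul hS)) (hρd x)]
  rw [pd_const_mul (sm_diff hS) 2, pd_const_mul (sm_diff hS) 4]
  rw [pd_sqrt (hρd x) (hne x)]
  have h2 : Real.sqrt (ρ x)^2 = ρ x := hsq x
  have hs0 : Real.sqrt (ρ x) ≠ 0 := hsne x
  generalize hgen : Real.sqrt (ρ x) = s at h2 hs0 ⊢
  rw [← h2]
  field_simp
  ring
end

section
/- For a smooth strictly positive ρ on 𝕋³, ∫_{𝕋³} ρ |∇² log ρ|² dx ≥ c ( ∫_{𝕋³} |∇²√ρ|² dx + ∫_{𝕋³} |∇ρ^{1/4}|⁴ dx ) for an absolute constant c > 0 (3-dimensional torus). -/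
open MeasureTheory
open scoped BigOperators

namespace JungelAux

open Set

abbrev E3 := Fin 3 → ℝ

lemma pd_eq {f : E3 → ℝ} {L : E3 →L[ℝ] ℝ} {x : E3} (h : HasFDerivAt f L x) (i : Fin 3) :
    pd i f x = L (Pi.single i 1) := by rw [pd, h.fderiv]

lemma contDiff_pd {f : E3 → ℝ} (hf : ContDiff ℝ (⊤:ℕ∞) f) (j : Fin 3) :
    ContDiff ℝ (⊤:ℕ∞) (pd j f) :=
  (hf.fderiv_right (m := (⊤:ℕ∞)) (by exact_mod_cast le_top)).clm_apply contDiff_const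

/-- periodicity w.r.t. the integer lattice directions -/
def Per (f : E3 → ℝ) : Prop := ∀ (x : E3) (i : Fin 3), f (x + Pi.single i 1) = f x

lemma per_pd {f : E3 → ℝ} (hf : Differentiable ℝ f) (hp : Per f) (j : Fin 3) :
    Per (pd j f) := by
  intro x i
  have key : fderiv ℝ f (x + Pi.single i 1) = fderiv ℝ f x := by
    have htr : HasFDerivAt (fun y : E3 => y + Pi.single i 1)
        (ContinuousLinearMap.id ℝ E3) x := (hasFDerivAt_id x).add_const _
    have hcomp : HasFDerivAt (fun y => f (y + Pi.single i 1))
        ((fderiv ℝ f (x + Pi.single i 1)).comp (ContinuousLinearMap.id ℝ E3)) x :=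
      (hf _).hasFDerivAt.comp x htr
    have hfun : (fun y => f (y + Pi.single i 1)) = f := funext fun y => hp y i
    rw [hfun] at hcomp
    have h2 := hcomp.fderiv
    rw [ContinuousLinearMap.comp_id] at h2
    exact h2.symm
  simp only [pd, key]

lemma insertNth_one_eq (i : Fin 3) (y : Fin 2 → ℝ) :
    (i.insertNth (1:ℝ) y : E3) = (i.insertNth (0:ℝ) y : E3) + Pi.single i 1 := by
  funext j
  rcases eq_or_ne j i with rfl | hne
  · simp
  · obtain ⟨k, rfl⟩ := Fin.exists_succAbove_eq hne
    simp [Fin.insertNth_apply_succAbove, Pi.single_eq_of_ne (Fin.succAbove_ne i k)]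

lemma integrableOn_Icc_of_continuous {f : E3 → ℝ} (hf : Continuous f) :
    IntegrableOn f (Icc (0:E3) 1) :=
  hf.continuousOn.integrableOn_compact isCompact_Icc

lemma integral_pd_sum_eq_zero (F : Fin 3 → E3 → ℝ)
    (hF : ∀ i, ContDiff ℝ (⊤:ℕ∞) (F i)) (hper : ∀ i, Per (F i)) :
    ∫ x in Icc (0:E3) 1, ∑ i, pd i (F i) x = 0 := by
  have hle : (0:E3) ≤ 1 := fun i => zero_le_one
  have key := integral_divergence_of_hasFDerivAt_off_countable'
    (a := 0) (b := 1) hle F (fun i x => fderiv ℝ (F i) x) ∅ countable_empty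
    (fun i => ((hF i).continuous).continuousOn)
    (fun x _ i => ((hF i).differentiable (by simp) x).hasFDerivAt)
    (by
      have : Continuous fun x => ∑ i, pd i (F i) x :=
        continuous_finset_sum _ fun i _ => (contDiff_pd (hF i) i).continuous
      exact integrableOn_Icc_of_continuous this)
  simp only [pd] at *
  rw [key]
  apply Finset.sum_eq_zero
  intro i _
  have heq : ∀ y : Fin 2 → ℝ, F i (i.insertNth ((1:E3) i) y) = F i (i.insertNth ((0:E3) i) y) := by
    intro y
    have h0 : ((0:E3) i) = (0:ℝ) := rfl
    have h1 : ((1:E3) i) = (1:ℝ) := rfl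
    rw [h0, h1, insertNth_one_eq, hper i]
  rw [setIntegral_congr_fun measurableSet_Icc (fun y _ => heq y), sub_self]

section Calculus
variable {u : E3 → ℝ}

lemma hasF (hu : ContDiff ℝ (⊤:ℕ∞) u) (x : E3) : HasFDerivAt u (fderiv ℝ u x) x :=
  (hu.differentiable (by simp) x).hasFDerivAt

lemma fderiv_apply_pd (x : E3) (i : Fin 3) : fderiv ℝ u x (Pi.single i 1) = pd i u x := rfl

lemma hasF_inv (hu : ContDiff ℝ (⊤:ℕ∞) u) (hupos : ∀ x, 0 < u x) (x : E3) :
    HasFDerivAt (fun y => (u y)⁻¹) ((-((u x)^2)⁻¹) • fderiv ℝ u x) x :=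
  (hasDerivAt_inv (ne_of_gt (hupos x))).comp_hasFDerivAt x (hasF hu x)

lemma pd_two_log (hu : ContDiff ℝ (⊤:ℕ∞) u) (hupos : ∀ x, 0 < u x) (j : Fin 3) :
    pd j (fun z => 2 * Real.log (u z)) = fun y => 2 * (pd j u y * (u y)⁻¹) := by
  funext x
  have h : HasFDerivAt (fun z => 2 * Real.log (u z))
      ((2:ℝ) • ((u x)⁻¹ • fderiv ℝ u x)) x :=
    ((hasF hu x).log (ne_of_gt (hupos x))).const_mul 2
  rw [pd_eq h]
  simp [fderiv_apply_pd, smul_eq_mul]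
  ring

lemma pd_pd_two_log (hu : ContDiff ℝ (⊤:ℕ∞) u) (hupos : ∀ x, 0 < u x) (i j : Fin 3) (x : E3) :
    pd i (pd j (fun z => 2 * Real.log (u z))) x
      = 2 * (pd j u x * (-((u x)^2)⁻¹ * pd i u x) + (u x)⁻¹ * pd i (pd j u) x) := by
  rw [pd_two_log hu hupos j]
  have h : HasFDerivAt (fun y => 2 * (pd j u y * (u y)⁻¹))
      ((2:ℝ) • (pd j u x • ((-((u x)^2)⁻¹) • fderiv ℝ u x) + (u x)⁻¹ • fderiv ℝ (pd j u) x)) x :=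
    ((hasF (contDiff_pd hu j) x).mul (hasF_inv hu hupos x)).const_mul 2
  rw [pd_eq h]
  simp [fderiv_apply_pd, smul_eq_mul]
  ring

lemma pd_sqrt (hu : ContDiff ℝ (⊤:ℕ∞) u) (hupos : ∀ x, 0 < u x) (i : Fin 3) (x : E3) :
    pd i (fun z => Real.sqrt (u z)) x = 1/(2*Real.sqrt (u x)) * pd i u x := by
  have h : HasFDerivAt (fun z => Real.sqrt (u z))
      ((1/(2*Real.sqrt (u x))) • fderiv ℝ u x) x :=
    (hasF hu x).sqrt (ne_of_gt (hupos x))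
  rw [pd_eq h]
  simp [fderiv_apply_pd, smul_eq_mul]

lemma pd_F (hu : ContDiff ℝ (⊤:ℕ∞) u) (hupos : ∀ x, 0 < u x) (i : Fin 3) (x : E3) :
    pd i (fun y => (∑ j, pd j u y * pd j u y) * (pd i u y * (u y)⁻¹)) x =
      (∑ j, pd j u x * pd j u x) *
          (pd i u x * (-((u x)^2)⁻¹ * pd i u x) + (u x)⁻¹ * pd i (pd i u) x)
        + (pd i u x * (u x)⁻¹) * (∑ j, 2 * (pd j u x * pd i (pd j u) x)) := by
  have hw : HasFDerivAt (fun y => ∑ j, pd j u y * pd j u y)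
      (∑ j, (pd j u x • fderiv ℝ (pd j u) x + pd j u x • fderiv ℝ (pd j u) x)) x :=
    HasFDerivAt.fun_sum fun j _ => (hasF (contDiff_pd hu j) x).mul (hasF (contDiff_pd hu j) x)
  have h := hw.fun_mul ((hasF (contDiff_pd hu i) x).fun_mul (hasF_inv hu hupos x))
  rw [pd_eq h]
  simp only [ContinuousLinearMap.add_apply, ContinuousLinearMap.smul_apply,
    ContinuousLinearMap.sum_apply, fderiv_apply_pd, smul_eq_mul, Finset.mul_sum]
  congr 1
  exact Finset.sum_congr rfl fun j _ => by ring

end Calculus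

set_option maxHeartbeats 1000000 in
lemma key_alg (p : Fin 3 → ℝ) (q : Fin 3 → Fin 3 → ℝ) (v : ℝ) :
    (9/8) * ((∑ i, p i * p i)^2 * (v*v))
      ≤ (∑ i, ((∑ j, p j * p j) * (p i * (-(v*v) * p i) + v * q i i)
          + (p i * v) * (∑ j, 2 * (p j * q i j))))
        + 4 * ∑ i, ∑ j, (q i j - p i * p j * v)^2 := by
  simp only [Fin.sum_univ_three]
  set p0 := p 0; set p1 := p 1; set p2 := p 2
  set q00 := q 0 0; set q01 := q 0 1; set q02 := q 0 2
  set q10 := q 1 0; set q11 := q 1 1; set q12 := q 1 2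
  set q20 := q 2 0; set q21 := q 2 1; set q22 := q 2 2
  have key : ((p0*p0 + p1*p1 + p2*p2) * (p0 * (-(v*v) * p0) + v * q00) + (p0*v) * (2*(p0*q00) + 2*(p1*q01) + 2*(p2*q02))
      + ((p0*p0 + p1*p1 + p2*p2) * (p1 * (-(v*v) * p1) + v * q11) + (p1*v) * (2*(p0*q10) + 2*(p1*q11) + 2*(p2*q12)))
      + ((p0*p0 + p1*p1 + p2*p2) * (p2 * (-(v*v) * p2) + v * q22) + (p2*v) * (2*(p0*q20) + 2*(p1*q21) + 2*(p2*q22))))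
      + 4 * ((q00 - p0*p0*v)^2 + (q01 - p0*p1*v)^2 + (q02 - p0*p2*v)^2
        + ((q10 - p1*p0*v)^2 + (q11 - p1*p1*v)^2 + (q12 - p1*p2*v)^2)
        + ((q20 - p2*p0*v)^2 + (q21 - p2*p1*v)^2 + (q22 - p2*p2*v)^2))
      - (9/8) * ((p0*p0 + p1*p1 + p2*p2)^2 * (v*v))
      = (1/2) * ((2*(q00 - p0*p0*v) + p0*p0*v)^2 + (2*(q01 - p0*p1*v) + p0*p1*v)^2
          + (2*(q02 - p0*p2*v) + p0*p2*v)^2 + (2*(q10 - p1*p0*v) + p1*p0*v)^2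
          + (2*(q11 - p1*p1*v) + p1*p1*v)^2 + (2*(q12 - p1*p2*v) + p1*p2*v)^2
          + (2*(q20 - p2*p0*v) + p2*p0*v)^2 + (2*(q21 - p2*p1*v) + p2*p1*v)^2
          + (2*(q22 - p2*p2*v) + p2*p2*v)^2)
        + (1/2) * ((2*(q00 - p0*p0*v) + (p0*p0 + p1*p1 + p2*p2)*v/2)^2
          + (2*(q11 - p1*p1*v) + (p0*p0 + p1*p1 + p2*p2)*v/2)^2
          + (2*(q22 - p2*p2*v) + (p0*p0 + p1*p1 + p2*p2)*v/2)^2)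
        + 2 * ((q01 - p0*p1*v)^2 + (q02 - p0*p2*v)^2 + (q10 - p1*p0*v)^2
          + (q12 - p1*p2*v)^2 + (q20 - p2*p0*v)^2 + (q21 - p2*p1*v)^2) := by ring
  have hE : (0:ℝ) ≤ ((1/2) * ((2*(q00 - p0*p0*v) + p0*p0*v)^2 + (2*(q01 - p0*p1*v) + p0*p1*v)^2
          + (2*(q02 - p0*p2*v) + p0*p2*v)^2 + (2*(q10 - p1*p0*v) + p1*p0*v)^2
          + (2*(q11 - p1*p1*v) + p1*p1*v)^2 + (2*(q12 - p1*p2*v) + p1*p2*v)^2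
          + (2*(q20 - p2*p0*v) + p2*p0*v)^2 + (2*(q21 - p2*p1*v) + p2*p1*v)^2
          + (2*(q22 - p2*p2*v) + p2*p2*v)^2)
        + (1/2) * ((2*(q00 - p0*p0*v) + (p0*p0 + p1*p1 + p2*p2)*v/2)^2
          + (2*(q11 - p1*p1*v) + (p0*p0 + p1*p1 + p2*p2)*v/2)^2
          + (2*(q22 - p2*p2*v) + (p0*p0 + p1*p1 + p2*p2)*v/2)^2)
        + 2 * ((q01 - p0*p1*v)^2 + (q02 - p0*p2*v)^2 + (q10 - p1*p0*v)^2
          + (q12 - p1*p2*v)^2 + (q20 - p2*p0*v)^2 + (q21 - p2*p1*v)^2)) := by positivity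
  linarith [key, hE]

set_option maxHeartbeats 1000000 in
lemma X_alg (p : Fin 3 → ℝ) (q : Fin 3 → Fin 3 → ℝ) (v : ℝ) :
    (∑ i, ∑ j, (q i j)^2)
      ≤ 2 * (∑ i, ∑ j, (q i j - p i * p j * v)^2) + 2 * ((∑ i, p i * p i)^2 * (v*v)) := by
  simp only [Fin.sum_univ_three]
  set p0 := p 0; set p1 := p 1; set p2 := p 2
  have key : ∀ a b : ℝ, a^2 ≤ 2*(a - b)^2 + 2*b^2 := by
    intro a b; nlinarith [sq_nonneg (a - 2*b)]
  have h00 := key (q 0 0) (p0*p0*v); have h01 := key (q 0 1) (p0*p1*v)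
  have h02 := key (q 0 2) (p0*p2*v); have h10 := key (q 1 0) (p1*p0*v)
  have h11 := key (q 1 1) (p1*p1*v); have h12 := key (q 1 2) (p1*p2*v)
  have h20 := key (q 2 0) (p2*p0*v); have h21 := key (q 2 1) (p2*p1*v)
  have h22 := key (q 2 2) (p2*p2*v)
  have hw : (p0*p0*v)^2 + (p0*p1*v)^2 + (p0*p2*v)^2 + (p1*p0*v)^2 + (p1*p1*v)^2
      + (p1*p2*v)^2 + (p2*p0*v)^2 + (p2*p1*v)^2 + (p2*p2*v)^2
      = (p0*p0 + p1*p1 + p2*p2)^2 * (v*v) := by ring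
  linarith

end JungelAux

set_option maxHeartbeats 2000000

open JungelAux Set in
/-- Jüngel-type inequality on the torus (modeled by `ℤ³`-periodic smooth functions,
with integrals over the fundamental cell `[0,1]³`): there is an absolute constant
`c > 0` such that
`∫ ρ |∇² log ρ|² ≥ c (∫ |∇²√ρ|² + ∫ |∇ρ^{1/4}|⁴)` for every smooth positive `ρ`. -/
theorem jungel_inequality :
    ∃ c > (0:ℝ), ∀ ρ : (Fin 3 → ℝ) → ℝ,
      ContDiff ℝ (⊤ : ℕ∞) ρ → (∀ x, 0 < ρ x) →
      (∀ (x : Fin 3 → ℝ) (i : Fin 3), ρ (x + Pi.single i 1) = ρ x) →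
      (∫ x in Set.Icc (0 : Fin 3 → ℝ) 1,
          ρ x * ∑ i, ∑ j, (pd i (pd j (fun z => Real.log (ρ z))) x) ^ 2)
        ≥ c * ((∫ x in Set.Icc (0 : Fin 3 → ℝ) 1,
              ∑ i, ∑ j, (pd i (pd j (fun z => Real.sqrt (ρ z))) x) ^ 2)
            + ∫ x in Set.Icc (0 : Fin 3 → ℝ) 1,
              (∑ i, (pd i (fun z => (ρ z) ^ ((1:ℝ)/4)) x) ^ 2) ^ 2) := by
  refine ⟨1/8, by norm_num, ?_⟩
  intro ρ hρ hpos hper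
  set u : E3 → ℝ := fun z => Real.sqrt (ρ z) with hu_def
  have hupos : ∀ x, 0 < u x := fun x => Real.sqrt_pos.2 (hpos x)
  have hune : ∀ x, u x ≠ 0 := fun x => ne_of_gt (hupos x)
  have hu : ContDiff ℝ (⊤:ℕ∞) u :=
    contDiff_iff_contDiffAt.2 fun x => hρ.contDiffAt.sqrt (ne_of_gt (hpos x))
  have hrho_eq : ∀ x, ρ x = u x ^ 2 := fun x => (Real.sq_sqrt (hpos x).le).symm
  have huper : Per u := by
    intro x i
    show Real.sqrt (ρ (x + Pi.single i 1)) = Real.sqrt (ρ x)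
    rw [hper x i]
  have hudiff : Differentiable ℝ u := hu.differentiable (by simp)
  have hPper : ∀ (j : Fin 3) (x : E3) (k : Fin 3),
      pd j u (x + Pi.single k 1) = pd j u x := fun j => per_pd hudiff huper j
  have hPsm : ∀ j, ContDiff ℝ (⊤:ℕ∞) (pd j u) := contDiff_pd hu
  have hQsm : ∀ i j, ContDiff ℝ (⊤:ℕ∞) (pd i (pd j u)) := fun i j => contDiff_pd (hPsm j) i
  have huinv : Continuous fun x => (u x)⁻¹ := hu.continuous.inv₀ hune
  -- named integrals
  set S := Set.Icc (0:E3) 1 with hS_def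
  -- the three u-level functions
  have hαcont : Continuous fun x =>
      ∑ i, ∑ j, (pd i (pd j u) x - pd i u x * pd j u x * (u x)⁻¹)^2 := by
    refine continuous_finset_sum _ fun i _ => continuous_finset_sum _ fun j _ => ?_
    exact (((hQsm i j).continuous).sub
      ((((hPsm i).continuous).mul ((hPsm j).continuous)).mul huinv)).pow 2
  have hzcont : Continuous fun x =>
      (∑ i, pd i u x * pd i u x)^2 * ((u x)⁻¹ * (u x)⁻¹) := by
    exact (((continuous_finset_sum _ fun i _ =>
      ((hPsm i).continuous).mul ((hPsm i).continuous)).pow 2)).mul (huinv.mul huinv)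
  have hXcont : Continuous fun x => ∑ i, ∑ j, (pd i (pd j u) x)^2 :=
    continuous_finset_sum _ fun i _ => continuous_finset_sum _ fun j _ =>
      ((hQsm i j).continuous).pow 2
  set F : Fin 3 → E3 → ℝ :=
    fun i => fun y => (∑ j, pd j u y * pd j u y) * (pd i u y * (u y)⁻¹) with hF_def
  have hFsm : ∀ i, ContDiff ℝ (⊤:ℕ∞) (F i) := fun i =>
    (ContDiff.sum fun j _ => (hPsm j).mul (hPsm j)).mul
      ((hPsm i).mul (hu.inv hune))
  have hFper : ∀ i, Per (F i) := by
    intro i x k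
    show (∑ j, pd j u (x + Pi.single k 1) * pd j u (x + Pi.single k 1)) *
        (pd i u (x + Pi.single k 1) * (u (x + Pi.single k 1))⁻¹)
      = (∑ j, pd j u x * pd j u x) * (pd i u x * (u x)⁻¹)
    simp only [hPper, huper x k]
  have hDcont : Continuous fun x => ∑ i, pd i (F i) x :=
    continuous_finset_sum _ fun i _ => (contDiff_pd (hFsm i) i).continuous
  have int_α := integrableOn_Icc_of_continuous hαcont
  have int_z := integrableOn_Icc_of_continuous hzcont
  have int_X := integrableOn_Icc_of_continuous hXcont
  have int_D := integrableOn_Icc_of_continuous hDcont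
  -- divergence identity
  have hD0 : ∫ x in S, (∑ i, pd i (F i) x) = 0 := integral_pd_sum_eq_zero F hFsm hFper
  -- pointwise inequality 1
  have hpt1 : ∀ x, (9/8) * ((∑ i, pd i u x * pd i u x)^2 * ((u x)⁻¹ * (u x)⁻¹))
      ≤ (∑ i, pd i (F i) x)
        + 4 * ∑ i, ∑ j, (pd i (pd j u) x - pd i u x * pd j u x * (u x)⁻¹)^2 := by
    intro x
    have hinv2 : ((u x)^2)⁻¹ = (u x)⁻¹ * (u x)⁻¹ := by rw [sq, mul_inv]
    have hD : (∑ i, pd i (F i) x)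
        = ∑ i, ((∑ j, pd j u x * pd j u x) *
            (pd i u x * (-((u x)⁻¹ * (u x)⁻¹) * pd i u x) + (u x)⁻¹ * pd i (pd i u) x)
          + (pd i u x * (u x)⁻¹) * (∑ j, 2 * (pd j u x * pd i (pd j u) x))) := by
      refine Finset.sum_congr rfl fun i _ => ?_
      rw [hF_def]
      rw [pd_F hu hupos i x, hinv2]
    rw [hD]
    exact key_alg (fun j => pd j u x) (fun i j => pd i (pd j u) x) ((u x)⁻¹)
  -- pointwise inequality 2
  have hpt2 : ∀ x, (∑ i, ∑ j, (pd i (pd j u) x)^2)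
      ≤ 2 * (∑ i, ∑ j, (pd i (pd j u) x - pd i u x * pd j u x * (u x)⁻¹)^2)
        + 2 * ((∑ i, pd i u x * pd i u x)^2 * ((u x)⁻¹ * (u x)⁻¹)) := fun x =>
    X_alg (fun j => pd j u x) (fun i j => pd i (pd j u) x) ((u x)⁻¹)
  -- abbreviate integrals
  set a := ∫ x in S, (∑ i, ∑ j, (pd i (pd j u) x - pd i u x * pd j u x * (u x)⁻¹)^2) with ha_def
  set zi := ∫ x in S, ((∑ i, pd i u x * pd i u x)^2 * ((u x)⁻¹ * (u x)⁻¹)) with hz_def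
  set Xi := ∫ x in S, (∑ i, ∑ j, (pd i (pd j u) x)^2) with hX_def
  have ha_nonneg : 0 ≤ a := setIntegral_nonneg measurableSet_Icc fun x _ => by positivity
  have hz4 : zi ≤ 4 * a := by
    have hmono : ∫ x in S, ((9:ℝ)/8 * ((∑ i, pd i u x * pd i u x)^2 * ((u x)⁻¹ * (u x)⁻¹)))
        ≤ ∫ x in S, ((∑ i, pd i (F i) x)
          + 4 * ∑ i, ∑ j, (pd i (pd j u) x - pd i u x * pd j u x * (u x)⁻¹)^2) :=
      setIntegral_mono_on (int_z.const_mul _) (int_D.add (int_α.const_mul _))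
        measurableSet_Icc (fun x _ => hpt1 x)
    rw [integral_const_mul, integral_add int_D (int_α.const_mul _), integral_const_mul,
      hD0] at hmono
    linarith
  have hX10 : Xi ≤ 2 * a + 2 * zi := by
    have hmono : ∫ x in S, (∑ i, ∑ j, (pd i (pd j u) x)^2)
        ≤ ∫ x in S, ((2:ℝ) * (∑ i, ∑ j, (pd i (pd j u) x - pd i u x * pd j u x * (u x)⁻¹)^2)
          + 2 * ((∑ i, pd i u x * pd i u x)^2 * ((u x)⁻¹ * (u x)⁻¹))) :=
      setIntegral_mono_on int_X ((int_α.const_mul _).add (int_z.const_mul _))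
        measurableSet_Icc (fun x _ => hpt2 x)
    rw [integral_add (int_α.const_mul _) (int_z.const_mul _), integral_const_mul,
      integral_const_mul] at hmono
    linarith
  -- rewrite the three statement integrals
  have hL : (∫ x in S, ρ x * ∑ i, ∑ j, (pd i (pd j (fun z => Real.log (ρ z))) x) ^ 2)
      = 4 * a := by
    rw [ha_def, ← integral_const_mul]
    refine setIntegral_congr_fun measurableSet_Icc fun x _ => ?_
    have hlogfun : (fun z => Real.log (ρ z)) = fun z => 2 * Real.log (u z) := by
      funext z
      rw [hrho_eq z, Real.log_pow]
      push_cast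
      ring
    rw [hlogfun, hrho_eq x, Finset.mul_sum]
    rw [show (4:ℝ) * ∑ i, ∑ j, (pd i (pd j u) x - pd i u x * pd j u x * (u x)⁻¹)^2
        = ∑ i, (4:ℝ) * ∑ j, (pd i (pd j u) x - pd i u x * pd j u x * (u x)⁻¹)^2 from by
      rw [Finset.mul_sum]]
    refine Finset.sum_congr rfl fun i _ => ?_
    rw [Finset.mul_sum, Finset.mul_sum]
    refine Finset.sum_congr rfl fun j _ => ?_
    rw [pd_pd_two_log hu hupos i j x]
    have hne := hune x
    field_simp
    ring
  have hR : (∫ x in S, (∑ i, (pd i (fun z => (ρ z) ^ ((1:ℝ)/4)) x) ^ 2) ^ 2)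
      = zi / 16 := by
    rw [hz_def, ← integral_div]
    refine setIntegral_congr_fun measurableSet_Icc fun x _ => ?_
    have hqfun : (fun z => (ρ z) ^ ((1:ℝ)/4)) = fun z => Real.sqrt (u z) := by
      funext z
      show (ρ z) ^ ((1:ℝ)/4) = Real.sqrt (Real.sqrt (ρ z))
      rw [show Real.sqrt (ρ z) = (ρ z) ^ ((1:ℝ)/2) from Real.sqrt_eq_rpow _,
        show Real.sqrt ((ρ z) ^ ((1:ℝ)/2)) = ((ρ z) ^ ((1:ℝ)/2)) ^ ((1:ℝ)/2) from
          Real.sqrt_eq_rpow _,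
        ← Real.rpow_mul (hpos z).le]
      norm_num
    rw [hqfun]
    have hsum : (∑ i, (pd i (fun z => Real.sqrt (u z)) x) ^ 2)
        = (∑ i, pd i u x * pd i u x) * (4 * u x)⁻¹ := by
      rw [Finset.sum_mul]
      refine Finset.sum_congr rfl fun i _ => ?_
      have h14 : (1 / (2 * Real.sqrt (u x)))^2 = (4 * u x)⁻¹ := by
        rw [div_pow, one_pow, mul_pow, Real.sq_sqrt (hupos x).le]
        norm_num
      rw [pd_sqrt hu hupos i x, mul_pow, h14]
      ring
    rw [hsum, mul_inv]
    ring
  rw [hL, hR]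
  linarith
end
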